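/- Let ψ, φ ∈ R^n be probability vectors with ψ strictly majorized by φ. Then for every integer k ≥ 1, the k-fold tensor power ψ^{⊗k} is strictly majorized by φ^{⊗k}. -/

import Mathlib

open Finset

/-- `eSum v m` is the sum of the `m` largest entries of `v`
(the supremum of sums over subsets of cardinality `m`). -/
noncomputable def eSum {ι : Type} [Fintype ι] (v : ι → ℝ) (m : ℕ) : ℝ :=
  sSup {x | ∃ s : Finset ι, s.card = m ∧ x = ∑ i ∈ s, v i}

/-- Majorization `x ≺ y`: partial sums of largest entries of `x` are dominated
by those of `y`, with equal total sums. -/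
def Maj {ι κ : Type} [Fintype ι] [Fintype κ] (x : ι → ℝ) (y : κ → ℝ) : Prop :=
  (∀ m : ℕ, 1 ≤ m → m < Fintype.card ι → eSum x m ≤ eSum y m) ∧
    ∑ i, x i = ∑ j, y j

/-- Strict majorization `x ◁ y`: all inequalities strict, total sums equal. -/
def SMaj {ι κ : Type} [Fintype ι] [Fintype κ] (x : ι → ℝ) (y : κ → ℝ) : Prop :=
  (∀ m : ℕ, 1 ≤ m → m < Fintype.card ι → eSum x m < eSum y m) ∧
    ∑ i, x i = ∑ j, y j

/-- Global uniformity: smallest entry divided by largest entry. -/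
noncomputable def gu {ι : Type} [Fintype ι] (v : ι → ℝ) : ℝ :=
  sInf (Set.range v) / sSup (Set.range v)

/-- The set of ratios `v b / v a` over consecutive distinct values `v b < v a`
(no value strictly in between). -/
def ratioSet {ι : Type} [Fintype ι] (v : ι → ℝ) : Set ℝ :=
  {r | ∃ a b : ι, v b < v a ∧ (¬ ∃ c : ι, v b < v c ∧ v c < v a) ∧ r = v b / v a}

open Classical in
noncomputable def lu {ι : Type} [Fintype ι] (v : ι → ℝ) : ℝ :=
  if (∃ a b : ι, v a ≠ v b) then sInf (ratioSet v) else 1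

open Classical in
/-- Maximal local uniformity: maximum ratio of consecutive distinct values;
`1` for a constant vector. -/
noncomputable def Lu {ι : Type} [Fintype ι] (v : ι → ℝ) : ℝ :=
  if (∃ a b : ι, v a ≠ v b) then sSup (ratioSet v) else 1

/-- Tensor (Kronecker) product of two vectors. -/
def tens {ι κ : Type} (x : ι → ℝ) (y : κ → ℝ) : ι × κ → ℝ :=
  fun p => x p.1 * y p.2

/-- `k`-fold tensor power of a vector. -/
def tpow {n : ℕ} (v : Fin n → ℝ) (k : ℕ) : (Fin k → Fin n) → ℝ :=
  fun f => ∏ i, v (f i)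

/-- A probability vector: nonnegative entries summing to one. -/
def IsProb {ι : Type} [Fintype ι] (v : ι → ℝ) : Prop :=
  (∀ i, 0 ≤ v i) ∧ ∑ i, v i = 1

/-- `v` sorted in non-increasing order. -/
noncomputable def sortDesc {n : ℕ} (v : Fin n → ℝ) : Fin n → ℝ :=
  fun i => v (Tuple.sort v i.rev)

/-- Shannon entropy (base 2), with the convention `0 log 0 = 0`. -/
noncomputable def entH {ι : Type} [Fintype ι] (v : ι → ℝ) : ℝ :=
  -∑ i, v i * Real.logb 2 (v i)



namespace SMajAux

variable {ι κ : Type} [Fintype ι] [Fintype κ]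


variable {ι κ : Type} [Fintype ι] [Fintype κ]

lemma eSum_set_eq (v : ι → ℝ) (m : ℕ) :
    {x | ∃ s : Finset ι, s.card = m ∧ x = ∑ i ∈ s, v i}
      = ↑(((Finset.univ : Finset ι).powersetCard m).image (fun s => ∑ i ∈ s, v i)) := by
  ext x
  simp only [Set.mem_setOf_eq, coe_image, Set.mem_image, mem_coe, mem_powersetCard,
    subset_univ, true_and]
  constructor
  · rintro ⟨s, hs, rfl⟩; exact ⟨s, hs, rfl⟩
  · rintro ⟨s, hs, rfl⟩; exact ⟨s, hs, rfl⟩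

lemma exists_eSum (v : ι → ℝ) {m : ℕ} (hm : m ≤ Fintype.card ι) :
    ∃ s : Finset ι, s.card = m ∧ eSum v m = ∑ i ∈ s, v i := by
  have hne : (((Finset.univ : Finset ι).powersetCard m).image
      (fun s => ∑ i ∈ s, v i)).Nonempty := by
    apply Finset.Nonempty.image
    exact Finset.powersetCard_nonempty.2 (by simpa using hm)
  have : eSum v m ∈ (((Finset.univ : Finset ι).powersetCard m).image
      (fun s => ∑ i ∈ s, v i)) := by
    rw [eSum, eSum_set_eq, hne.csSup_eq_max']
    exact Finset.max'_mem _ _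
  simp only [mem_image, mem_powersetCard, subset_univ, true_and] at this
  obtain ⟨s, hs, h⟩ := this
  exact ⟨s, hs, h.symm⟩

lemma sum_le_eSum (v : ι → ℝ) (s : Finset ι) : ∑ i ∈ s, v i ≤ eSum v s.card := by
  have hmem : s ∈ (Finset.univ : Finset ι).powersetCard s.card := by
    simp [mem_powersetCard]
  have hne : (((Finset.univ : Finset ι).powersetCard s.card).image
      (fun t => ∑ i ∈ t, v i)).Nonempty :=
    ⟨_, Finset.mem_image_of_mem _ hmem⟩
  rw [eSum, eSum_set_eq, hne.csSup_eq_max']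
  apply Finset.le_max'
  exact Finset.mem_image_of_mem _ hmem

lemma eSum_zero (v : ι → ℝ) : eSum v 0 = 0 := by
  obtain ⟨s, hs, h⟩ := exists_eSum v (Nat.zero_le _)
  rw [Finset.card_eq_zero] at hs
  simp [h, hs]

lemma eSum_card (v : ι → ℝ) : eSum v (Fintype.card ι) = ∑ i, v i := by
  obtain ⟨s, hs, h⟩ := exists_eSum v le_rfl
  have : s = Finset.univ := Finset.eq_univ_of_card s hs
  rw [h, this]

lemma eSum_nonneg {v : ι → ℝ} (hv : ∀ i, 0 ≤ v i) {m : ℕ} (hm : m ≤ Fintype.card ι) :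
    0 ≤ eSum v m := by
  obtain ⟨s, hs, h⟩ := exists_eSum v hm
  rw [h]; exact Finset.sum_nonneg fun i _ => hv i

lemma eSum_mono {v : ι → ℝ} (hv : ∀ i, 0 ≤ v i) {m m' : ℕ} (h : m ≤ m')
    (hm' : m' ≤ Fintype.card ι) : eSum v m ≤ eSum v m' := by
  obtain ⟨s, hs, hsum⟩ := exists_eSum v (h.trans hm')
  obtain ⟨t, hst, ht⟩ := Finset.exists_superset_card_eq (s := s)
    (n := m') (by rw [hs]; exact h) hm'
  rw [hsum]
  calc ∑ i ∈ s, v i ≤ ∑ i ∈ t, v i :=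
        Finset.sum_le_sum_of_subset_of_nonneg hst (fun i _ _ => hv i)
    _ ≤ eSum v m' := by rw [← ht]; exact sum_le_eSum v t

lemma eSum_le_total {v : ι → ℝ} (hv : ∀ i, 0 ≤ v i) {m : ℕ} (hm : m ≤ Fintype.card ι) :
    eSum v m ≤ ∑ i, v i := by
  rw [← eSum_card v]; exact eSum_mono hv hm le_rfl

lemma eSum_reindex (v : ι → ℝ) (e : κ ≃ ι) (m : ℕ) : eSum (v ∘ e) m = eSum v m := by
  classical
  unfold eSum
  congr 1
  ext x
  simp only [Set.mem_setOf_eq]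
  constructor
  · rintro ⟨s, hs, rfl⟩
    refine ⟨s.image e, by rw [Finset.card_image_of_injective _ e.injective, hs], ?_⟩
    rw [Finset.sum_image (fun a _ b _ h => e.injective h)]
    rfl
  · rintro ⟨s, hs, rfl⟩
    refine ⟨s.image e.symm, by rw [Finset.card_image_of_injective _ e.symm.injective, hs], ?_⟩
    rw [Finset.sum_image (fun a _ b _ h => e.symm.injective h)]
    simp



lemma strictMono_fin_le_apply {t c : ℕ} (f : Fin t → Fin c) (hf : StrictMono f) :
    ∀ (jv : ℕ) (j : Fin t), (j : ℕ) = jv → jv ≤ (f j : ℕ) := by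
  intro jv
  induction jv with
  | zero => intro j _; exact Nat.zero_le _
  | succ m ih =>
    intro j hj
    have hm : m < t := by omega
    have hlt : (⟨m, hm⟩ : Fin t) < j := by
      simp only [Fin.lt_def, Fin.val_mk]; omega
    have h1 := ih ⟨m, hm⟩ rfl
    have h2 : f ⟨m, hm⟩ < f j := hf hlt
    simp only [Fin.lt_def] at h2
    omega

lemma sum_antitone_le_prefix {c : ℕ} {w : Fin c → ℝ} (hw : Antitone w)
    {t : ℕ} (ht : t ≤ c) (s : Finset (Fin c)) (hs : s.card = t) :
    ∑ j ∈ s, w j ≤ ∑ j : Fin t, w (Fin.castLE ht j) := by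
  classical
  set f := s.orderEmbOfFin hs with hf
  have himg : Finset.univ.image f = s := by
    apply Finset.coe_injective
    rw [Finset.coe_image, Finset.coe_univ, Set.image_univ]
    exact s.range_orderEmbOfFin hs
  have : ∑ j ∈ s, w j = ∑ j : Fin t, w (f j) := by
    rw [← himg, Finset.sum_image (fun a _ b _ h => f.injective h)]
  rw [this]
  apply Finset.sum_le_sum
  intro j _
  apply hw
  rw [Fin.le_iff_val_le_val]
  exact strictMono_fin_le_apply f f.strictMono _ j rfl





lemma exists_sorted_equiv (v : ι → ℝ) :
    ∃ g : Fin (Fintype.card ι) ≃ ι, Antitone (v ∘ g) := by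
  let e := (Fintype.equivFin ι).symm
  let σ := Tuple.sort (v ∘ e)
  refine ⟨Fin.revPerm.trans (σ.trans e), ?_⟩
  intro i j hij
  have hm := Tuple.monotone_sort (v ∘ e)
  have : j.rev ≤ i.rev := Fin.rev_le_rev.2 hij
  exact hm this


lemma exists_sorted_equiv' {α : Type*} [LinearOrder α] (v : ι → α) :
    ∃ g : Fin (Fintype.card ι) ≃ ι, Antitone (v ∘ g) := by
  let e := (Fintype.equivFin ι).symm
  let σ := Tuple.sort (v ∘ e)
  refine ⟨Fin.revPerm.trans (σ.trans e), ?_⟩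
  intro i j hij
  have hm := Tuple.monotone_sort (v ∘ e)
  have : j.rev ≤ i.rev := Fin.rev_le_rev.2 hij
  exact hm this

lemma eSum_eq_prefix (v : ι → ℝ) (g : Fin (Fintype.card ι) ≃ ι) (hw : Antitone (v ∘ g))
    {t : ℕ} (ht : t ≤ Fintype.card ι) :
    eSum v t = ∑ j : Fin t, (v ∘ g) (Fin.castLE ht j) := by
  classical
  apply le_antisymm
  · obtain ⟨s, hs, hsum⟩ := exists_eSum v ht
    rw [hsum]
    have himg : (s.image g.symm).card = t := by
      rw [Finset.card_image_of_injective _ g.symm.injective, hs]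
    have heq : ∑ i ∈ s, v i = ∑ j ∈ s.image g.symm, (v ∘ g) j := by
      rw [Finset.sum_image (fun a _ b _ h => g.symm.injective h)]
      simp
    rw [heq]
    exact sum_antitone_le_prefix hw ht _ himg
  · have hinj : Function.Injective (fun j : Fin t => g (Fin.castLE ht j)) :=
      g.injective.comp (Fin.strictMono_castLE ht).injective
    have hcard : (Finset.univ.image (fun j : Fin t => g (Fin.castLE ht j))).card = t := by
      rw [Finset.card_image_of_injective _ hinj, Finset.card_univ, Fintype.card_fin]
    have := sum_le_eSum v (Finset.univ.image (fun j : Fin t => g (Fin.castLE ht j)))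
    rw [hcard] at this
    refine le_trans (le_of_eq ?_) this
    rw [Finset.sum_image (fun a _ b _ h => hinj h)]
    rfl

lemma eSum_eq_range (v : ι → ℝ) (g : Fin (Fintype.card ι) ≃ ι) (hw : Antitone (v ∘ g))
    {t : ℕ} (ht : t ≤ Fintype.card ι) :
    eSum v t = ∑ j ∈ Finset.range t,
      (if h : j < Fintype.card ι then (v ∘ g) ⟨j, h⟩ else 0) := by
  rw [eSum_eq_prefix v g hw ht, ← Fin.sum_univ_eq_sum_range]
  apply Finset.sum_congr rfl
  intro j _
  rw [dif_pos (lt_of_lt_of_le j.isLt ht)]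
  rfl

lemma abel_compare : ∀ (c : ℕ) (d g : ℕ → ℝ),
    (∀ t, t ≤ c → 0 ≤ ∑ j ∈ Finset.range t, d j) →
    (∀ i j, i ≤ j → j < c → g j ≤ g i) →
    (∀ j, j < c → 0 ≤ g j) →
    0 ≤ ∑ j ∈ Finset.range c, d j * g j := by
  intro c
  induction c with
  | zero => intro d g _ _ _; simp
  | succ c ih =>
    intro d g hD hg hg0
    have key : ∑ j ∈ Finset.range (c+1), d j * g j
        = (∑ j ∈ Finset.range c, d j * (g j - g c))
          + g c * ∑ j ∈ Finset.range (c+1), d j := by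
      have e1 : ∑ j ∈ Finset.range (c+1), d j * g j
          = ∑ j ∈ Finset.range (c+1), (d j * (g j - g c) + g c * d j) :=
        Finset.sum_congr rfl (fun j _ => by ring)
      rw [e1, Finset.sum_add_distrib, ← Finset.mul_sum,
        Finset.sum_range_succ (fun j => d j * (g j - g c))]
      ring
    rw [key]
    have h1 : 0 ≤ ∑ j ∈ Finset.range c, d j * (g j - g c) := by
      apply ih d (fun j => g j - g c)
      · intro t htc; exact hD t (le_trans htc (Nat.le_succ c))
      · intro i j hij hjc
        have := hg i j hij (lt_trans hjc (Nat.lt_succ_self c))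
        linarith
      · intro j hjc
        have := hg j c (le_of_lt hjc) (Nat.lt_succ_self c)
        linarith
    have h2 : 0 ≤ g c * ∑ j ∈ Finset.range (c+1), d j :=
      mul_nonneg (hg0 c (Nat.lt_succ_self c)) (hD (c+1) le_rfl)
    linarith

lemma sum_mul_eSum_le (ψ φ : ι → ℝ) (y : κ → ℝ)
    (hψ0 : ∀ i, 0 ≤ ψ i) (hy0 : ∀ j, 0 ≤ y j)
    (hmaj : ∀ t : ℕ, t ≤ Fintype.card ι → eSum ψ t ≤ eSum φ t)
    (M : ι → ℕ) (hM : ∀ i, M i ≤ Fintype.card κ) :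
    ∑ i, ψ i * eSum y (M i) ≤ eSum (tens φ y) (∑ i, M i) := by
  classical
  set c := Fintype.card ι with hc
  obtain ⟨gψ, hgψ⟩ := exists_sorted_equiv' ψ
  obtain ⟨gM, hgM⟩ := exists_sorted_equiv' M
  obtain ⟨gφ, hgφ⟩ := exists_sorted_equiv' φ
  set G : Fin c → ℝ := fun j => eSum y (M (gM j)) with hG
  have hGanti : Antitone G := by
    intro i j hij
    exact eSum_mono hy0 (hgM hij) (hM _)
  have hGnn : ∀ j, 0 ≤ G j := fun j => eSum_nonneg hy0 (hM _)
  have step12 : ∑ i, ψ i * eSum y (M i) ≤ ∑ j : Fin c, ψ (gψ j) * G j := by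
    have hmono : Monovary (ψ ∘ gψ) G := Antitone.monovary hgψ hGanti
    have hperm := hmono.sum_mul_comp_perm_le_sum_mul (σ := gψ.trans gM.symm)
    refine le_trans (le_of_eq ?_) hperm
    rw [← Equiv.sum_comp gψ (fun i => ψ i * eSum y (M i))]
    apply Finset.sum_congr rfl
    intro j _
    simp [hG, Function.comp, Equiv.trans_apply]
  have step3 : ∑ j : Fin c, ψ (gψ j) * G j ≤ ∑ j : Fin c, φ (gφ j) * G j := by
    set Pψ : ℕ → ℝ := fun j => if h : j < c then ψ (gψ ⟨j, h⟩) else 0 with hPψ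
    set Pφ : ℕ → ℝ := fun j => if h : j < c then φ (gφ ⟨j, h⟩) else 0 with hPφ
    set Gn : ℕ → ℝ := fun j => if h : j < c then G ⟨j, h⟩ else 0 with hGn
    have hDt : ∀ t, t ≤ c → 0 ≤ ∑ j ∈ Finset.range t, (Pφ j - Pψ j) := by
      intro t ht
      rw [Finset.sum_sub_distrib]
      have h1 : ∑ j ∈ Finset.range t, Pψ j = eSum ψ t := (eSum_eq_range ψ gψ hgψ ht).symm
      have h2 : ∑ j ∈ Finset.range t, Pφ j = eSum φ t := (eSum_eq_range φ gφ hgφ ht).symm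
      rw [h1, h2]
      have := hmaj t ht
      linarith
    have habel := abel_compare c (fun j => Pφ j - Pψ j) Gn hDt
      (by
        intro i j hij hjc
        simp only [hGn]
        rw [dif_pos hjc, dif_pos (lt_of_le_of_lt hij hjc)]
        exact hGanti (by exact_mod_cast hij))
      (by
        intro j hjc
        simp only [hGn]
        rw [dif_pos hjc]
        exact hGnn _)
    have hexp : ∑ j ∈ Finset.range c, (Pφ j - Pψ j) * Gn j
        = ∑ j : Fin c, φ (gφ j) * G j - ∑ j : Fin c, ψ (gψ j) * G j := by
      have e1 : ∑ j ∈ Finset.range c, (Pφ j - Pψ j) * Gn j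
          = ∑ j ∈ Finset.range c, (Pφ j * Gn j - Pψ j * Gn j) :=
        Finset.sum_congr rfl (fun j _ => by ring)
      rw [e1, Finset.sum_sub_distrib]
      congr 1
      · rw [← Fin.sum_univ_eq_sum_range (fun j => Pφ j * Gn j) c]
        apply Finset.sum_congr rfl
        intro j _
        simp only [hPφ, hGn]
        rw [dif_pos j.isLt, dif_pos j.isLt, Fin.eta]
      · rw [← Fin.sum_univ_eq_sum_range (fun j => Pψ j * Gn j) c]
        apply Finset.sum_congr rfl
        intro j _
        simp only [hPψ, hGn]
        rw [dif_pos j.isLt, dif_pos j.isLt, Fin.eta]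
    rw [hexp] at habel
    linarith
  have step4 : ∑ j : Fin c, φ (gφ j) * G j ≤ eSum (tens φ y) (∑ i, M i) := by
    have hT : ∀ j : Fin c, ∃ T : Finset κ, T.card = M (gM j) ∧ eSum y (M (gM j)) = ∑ b ∈ T, y b :=
      fun j => exists_eSum y (hM (gM j))
    choose T hTcard hTsum using hT
    set S : Finset (ι × κ) := Finset.univ.biUnion (fun j : Fin c => {gφ j} ×ˢ T j) with hS
    have hdisj : ∀ j ∈ (Finset.univ : Finset (Fin c)), ∀ j' ∈ (Finset.univ : Finset (Fin c)),
        j ≠ j' → Disjoint ({gφ j} ×ˢ T j) ({gφ j'} ×ˢ T j') := by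
      intro j _ j' _ hjj'
      rw [Finset.disjoint_left]
      rintro ⟨a, b⟩ hab hab'
      rw [Finset.mem_product, Finset.mem_singleton] at hab hab'
      exact hjj' (gφ.injective (hab.1.symm ▸ hab'.1))
    have hcardS : S.card = ∑ i, M i := by
      rw [hS, Finset.card_biUnion hdisj]
      rw [← Equiv.sum_comp gM M]
      apply Finset.sum_congr rfl
      intro j _
      rw [Finset.card_product, Finset.card_singleton, one_mul, hTcard]
    have hsumS : ∑ p ∈ S, tens φ y p = ∑ j : Fin c, φ (gφ j) * G j := by
      rw [hS, Finset.sum_biUnion hdisj]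
      apply Finset.sum_congr rfl
      intro j _
      rw [Finset.sum_product, Finset.sum_singleton]
      simp only [tens, hG]
      rw [hTsum j, Finset.mul_sum]
    have := sum_le_eSum (tens φ y) S
    rw [hcardS, hsumS] at this
    exact this
  exact le_trans step12 (le_trans step3 step4)

lemma tens_sum_decompose (ψ : ι → ℝ) (x : κ → ℝ) (hψ0 : ∀ i, 0 ≤ ψ i) (S : Finset (ι × κ)) :
    ∃ M : ι → ℕ, (∀ i, M i ≤ Fintype.card κ) ∧ (∑ i, M i = S.card) ∧
      (∑ p ∈ S, tens ψ x p ≤ ∑ i, ψ i * eSum x (M i)) := by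
  classical
  refine ⟨fun i => (S.filter (fun p => p.1 = i)).card, ?_, ?_, ?_⟩
  · intro i
    rw [← Finset.card_univ (α := κ)]
    apply Finset.card_le_card_of_injOn Prod.snd (fun p _ => Finset.mem_univ _)
    intro p hp q hq hpq
    rw [Finset.coe_filter] at hp hq
    exact Prod.ext (hp.2.trans hq.2.symm) hpq
  · exact (Finset.card_eq_sum_card_fiberwise (fun p _ => Finset.mem_univ p.1)).symm
  · rw [← Finset.sum_fiberwise_of_maps_to (fun p (_ : p ∈ S) => Finset.mem_univ p.1) (tens ψ x)]
    apply Finset.sum_le_sum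
    intro i _
    have hinj : ∀ p ∈ S.filter (fun p => p.1 = i), ∀ q ∈ S.filter (fun p => p.1 = i),
        p.2 = q.2 → p = q := by
      intro p hp q hq hpq
      rw [Finset.mem_filter] at hp hq
      exact Prod.ext (hp.2.trans hq.2.symm) hpq
    have heq : ∑ p ∈ S.filter (fun p => p.1 = i), tens ψ x p
        = ψ i * ∑ p ∈ S.filter (fun p => p.1 = i), x p.2 := by
      rw [Finset.mul_sum]
      apply Finset.sum_congr rfl
      intro p hp
      rw [Finset.mem_filter] at hp
      rw [tens, hp.2]
    rw [heq]
    apply mul_le_mul_of_nonneg_left _ (hψ0 i)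
    have himg : ∑ p ∈ S.filter (fun p => p.1 = i), x p.2
        = ∑ b ∈ (S.filter (fun p => p.1 = i)).image Prod.snd, x b := by
      rw [Finset.sum_image hinj]
    rw [himg]
    have hc := Finset.card_image_of_injOn (f := Prod.snd)
      (s := S.filter (fun p => p.1 = i))
      (fun p hp q hq hpq => hinj p (Finset.mem_coe.1 hp) q (Finset.mem_coe.1 hq) hpq)
    calc ∑ b ∈ (S.filter (fun p => p.1 = i)).image Prod.snd, x b
        ≤ eSum x ((S.filter (fun p => p.1 = i)).image Prod.snd).card := sum_le_eSum x _
      _ = eSum x (S.filter (fun p => p.1 = i)).card := by rw [hc]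

lemma pos_of_smaj (ψ φ : ι → ℝ) (hψ : IsProb ψ) (hφ : IsProb φ) (h : SMaj ψ φ) (i : ι) :
    0 < ψ i := by
  classical
  have hne : Nonempty ι := ⟨i⟩
  have hc1 : 1 ≤ Fintype.card ι := Fintype.card_pos
  rcases eq_or_lt_of_le hc1 with hc | hc
  · have huniv : (Finset.univ : Finset ι) = {i} := by
      apply Finset.eq_singleton_iff_unique_mem.2
      exact ⟨Finset.mem_univ i, fun j _ => Fintype.card_le_one_iff.1 (le_of_eq hc.symm) j i⟩
    have := hψ.2
    rw [huniv, Finset.sum_singleton] at this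
    rw [this]; norm_num
  · have herase : (Finset.univ.erase i).card = Fintype.card ι - 1 := by
      rw [Finset.card_erase_of_mem (Finset.mem_univ i), Finset.card_univ]
    have hsum : ψ i + ∑ j ∈ Finset.univ.erase i, ψ j = 1 := by
      rw [Finset.add_sum_erase _ ψ (Finset.mem_univ i)]
      exact hψ.2
    have h1 : ∑ j ∈ Finset.univ.erase i, ψ j ≤ eSum ψ (Fintype.card ι - 1) := by
      have := sum_le_eSum ψ (Finset.univ.erase i)
      rwa [herase] at this
    have h2 : eSum ψ (Fintype.card ι - 1) < eSum φ (Fintype.card ι - 1) :=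
      h.1 _ (by omega) (by omega)
    have h3 : eSum φ (Fintype.card ι - 1) ≤ ∑ j, φ j := eSum_le_total hφ.1 (by omega)
    rw [hφ.2] at h3
    linarith

lemma eSum_le_eSum_of_smaj (x y : κ → ℝ) (hx : IsProb x) (hy : IsProb y) (h : SMaj x y)
    {t : ℕ} (ht : t ≤ Fintype.card κ) : eSum x t ≤ eSum y t := by
  rcases Nat.eq_zero_or_pos t with rfl | ht1
  · rw [eSum_zero, eSum_zero]
  rcases eq_or_lt_of_le ht with rfl | ht2
  · rw [eSum_card, eSum_card, h.2]
  · exact le_of_lt (h.1 t ht1 ht2)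

lemma smaj_tens (ψ φ : ι → ℝ) (x y : κ → ℝ)
    (hψ : IsProb ψ) (hφ : IsProb φ) (hx : IsProb x) (hy : IsProb y)
    (hψφ : SMaj ψ φ) (hxy : SMaj x y) :
    SMaj (tens ψ x) (tens φ y) := by
  classical
  have hψpos : ∀ i, 0 < ψ i := pos_of_smaj ψ φ hψ hφ hψφ
  have htotal : ∀ (u : ι → ℝ) (v : κ → ℝ), ∑ p : ι × κ, tens u v p = (∑ i, u i) * (∑ j, v j) := by
    intro u v
    rw [Finset.sum_mul_sum]
    rw [Fintype.sum_prod_type]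
    rfl
  constructor
  swap
  · rw [htotal, htotal, hψ.2, hφ.2, hx.2, hy.2]
  intro m hm1 hm2
  rw [Fintype.card_prod] at hm2
  have hmle : m ≤ Fintype.card (ι × κ) := by rw [Fintype.card_prod]; omega
  obtain ⟨S, hScard, hSsum⟩ := exists_eSum (tens ψ x) hmle
  obtain ⟨M, hMle, hMsum, hMbound⟩ := tens_sum_decompose ψ x (fun i => le_of_lt (hψpos i)) S
  rw [hScard] at hMsum
  have hmajψφ : ∀ t, t ≤ Fintype.card ι → eSum ψ t ≤ eSum φ t :=
    fun t ht => eSum_le_eSum_of_smaj ψ φ hψ hφ hψφ ht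
  by_cases hcase : ∃ i, 0 < M i ∧ M i < Fintype.card κ
  · obtain ⟨i₀, hi₀⟩ := hcase
    have h2 : ∑ i, ψ i * eSum x (M i) < ∑ i, ψ i * eSum y (M i) := by
      apply Finset.sum_lt_sum
      · intro i _
        exact mul_le_mul_of_nonneg_left
          (eSum_le_eSum_of_smaj x y hx hy hxy (hMle i)) (le_of_lt (hψpos i))
      · refine ⟨i₀, Finset.mem_univ i₀, ?_⟩
        exact mul_lt_mul_of_pos_left (hxy.1 (M i₀) hi₀.1 hi₀.2) (hψpos i₀)
    have h3 : ∑ i, ψ i * eSum y (M i) ≤ eSum (tens φ y) m := by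
      rw [← hMsum]
      exact sum_mul_eSum_le ψ φ y (fun i => le_of_lt (hψpos i)) hy.1 hmajψφ M hMle
    rw [hSsum]
    calc ∑ p ∈ S, tens ψ x p ≤ ∑ i, ψ i * eSum x (M i) := hMbound
      _ < ∑ i, ψ i * eSum y (M i) := h2
      _ ≤ eSum (tens φ y) m := h3
  · push_neg at hcase
    have hM01 : ∀ i, M i = 0 ∨ M i = Fintype.card κ := by
      intro i
      rcases Nat.eq_zero_or_pos (M i) with h0 | h0
      · exact Or.inl h0
      · exact Or.inr (le_antisymm (hMle i) (hcase i h0))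
    set Tset := Finset.univ.filter (fun i => M i = Fintype.card κ) with hTset
    set t := Tset.card with ht
    have hcκ : 1 ≤ Fintype.card κ := by
      by_contra hcκ
      have : ∀ i, M i = 0 := fun i => by have := hMle i; omega
      rw [Finset.sum_congr rfl (fun i _ => this i)] at hMsum
      simp at hMsum
      omega
    have hmeq : m = t * Fintype.card κ := by
      rw [← hMsum]
      rw [← Finset.sum_filter_add_sum_filter_not Finset.univ (fun i => M i = Fintype.card κ)]
      have hz : ∑ i ∈ Finset.univ.filter (fun i => ¬ M i = Fintype.card κ), M i = 0 := by
        apply Finset.sum_eq_zero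
        intro i hi
        rw [Finset.mem_filter] at hi
        rcases hM01 i with h0 | h0
        · exact h0
        · exact absurd h0 hi.2
      rw [hz, add_zero]
      rw [Finset.sum_congr rfl (fun i hi => (Finset.mem_filter.1 hi).2)]
      rw [Finset.sum_const, smul_eq_mul]
    have ht1 : 1 ≤ t := by
      by_contra h0
      have : t = 0 := by omega
      rw [this] at hmeq
      omega
    have ht2 : t < Fintype.card ι := by
      by_contra h0
      push_neg at h0
      have : Fintype.card ι * Fintype.card κ ≤ t * Fintype.card κ :=
        Nat.mul_le_mul_right _ h0
      omega
    have hA : ∑ p ∈ S, tens ψ x p ≤ ∑ i ∈ Tset, ψ i := by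
      refine le_trans hMbound (le_of_eq ?_)
      rw [← Finset.sum_filter_add_sum_filter_not Finset.univ (fun i => M i = Fintype.card κ)
        (fun i => ψ i * eSum x (M i))]
      have hz : ∑ i ∈ Finset.univ.filter (fun i => ¬ M i = Fintype.card κ),
          ψ i * eSum x (M i) = 0 := by
        apply Finset.sum_eq_zero
        intro i hi
        rw [Finset.mem_filter] at hi
        rcases hM01 i with h0 | h0
        · rw [h0, eSum_zero, mul_zero]
        · exact absurd h0 hi.2
      rw [hz, add_zero]
      apply Finset.sum_congr rfl
      intro i hi
      rw [Finset.mem_filter] at hi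
      rw [hi.2, eSum_card, hx.2, mul_one]
    have hB : ∑ i ∈ Tset, ψ i ≤ eSum ψ t := by
      have := sum_le_eSum ψ Tset
      rwa [← ht] at this
    have hC : eSum ψ t < eSum φ t := hψφ.1 t ht1 ht2
    have hD : eSum φ t ≤ eSum (tens φ y) m := by
      obtain ⟨Sφ, hSφcard, hSφsum⟩ := exists_eSum φ (le_of_lt ht2)
      have hprod : ∑ p ∈ Sφ ×ˢ Finset.univ, tens φ y p = eSum φ t := by
        rw [Finset.sum_product]
        rw [hSφsum]
        apply Finset.sum_congr rfl
        intro i _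
        rw [show ∑ j, tens φ y (i, j) = φ i * ∑ j, y j by rw [Finset.mul_sum]; rfl]
        rw [hy.2, mul_one]
      have hprodcard : (Sφ ×ˢ (Finset.univ : Finset κ)).card = m := by
        rw [Finset.card_product, hSφcard, Finset.card_univ, hmeq]
      have := sum_le_eSum (tens φ y) (Sφ ×ˢ Finset.univ)
      rwa [hprodcard, hprod] at this
    rw [hSsum]
    calc ∑ p ∈ S, tens ψ x p ≤ ∑ i ∈ Tset, ψ i := hA
      _ ≤ eSum ψ t := hB
      _ < eSum φ t := hC
      _ ≤ eSum (tens φ y) m := hD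

lemma smaj_reindex {ι' κ' : Type} [Fintype ι'] [Fintype κ'] (u : ι → ℝ) (v : κ → ℝ)
    (e : ι' ≃ ι) (e' : κ' ≃ κ) (h : SMaj u v) : SMaj (u ∘ e) (v ∘ e') := by
  constructor
  · intro m h1 h2
    rw [eSum_reindex u e, eSum_reindex v e']
    exact h.1 m h1 (by rwa [Fintype.card_congr e] at h2)
  · rw [show ∑ i, (u ∘ e) i = ∑ i, u i from Equiv.sum_comp e u,
      show ∑ j, (v ∘ e') j = ∑ j, v j from Equiv.sum_comp e' v]
    exact h.2

lemma isProb_tpow {n : ℕ} (ψ : Fin n → ℝ) (hψ : IsProb ψ) (k : ℕ) : IsProb (tpow ψ k) := by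
  induction k with
  | zero =>
    constructor
    · intro f; rw [tpow]; simp
    · simp [tpow]
  | succ k ih =>
    constructor
    · intro f
      exact Finset.prod_nonneg (fun i _ => hψ.1 _)
    · have he : ∀ f : Fin (k+1) → Fin n,
          tpow ψ (k+1) f = tens ψ (tpow ψ k) (((Fin.consEquiv (fun _ : Fin (k+1) => Fin n)).symm) f) := by
        intro f
        rw [tpow, tens, Fin.prod_univ_succ]
        rfl
      rw [Finset.sum_congr rfl (fun f _ => he f)]
      rw [Equiv.sum_comp ((Fin.consEquiv (fun _ : Fin (k+1) => Fin n)).symm) (tens ψ (tpow ψ k))]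
      rw [show ∑ p : Fin n × (Fin k → Fin n), tens ψ (tpow ψ k) p
          = (∑ i, ψ i) * (∑ g, tpow ψ k g) by
        rw [Finset.sum_mul_sum, Fintype.sum_prod_type]; rfl]
      rw [hψ.2, ih.2, mul_one]

end SMajAux

/-- strict majorization is preserved by tensor powers. -/
theorem strict_majorization_tensor_pow {n : ℕ} (ψ φ : Fin n → ℝ)
    (hψ : IsProb ψ) (hφ : IsProb φ) (h : SMaj ψ φ)
    (k : ℕ) (hk : 1 ≤ k) : SMaj (tpow ψ k) (tpow φ k) := by
  clear hk
  induction k with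
  | zero =>
    constructor
    · intro m hm1 hm2
      have : Fintype.card (Fin 0 → Fin n) = 1 := by simp
      omega
    · rw [(SMajAux.isProb_tpow ψ hψ 0).2, (SMajAux.isProb_tpow φ hφ 0).2]
  | succ k ih =>
    have hstep := SMajAux.smaj_tens ψ φ (tpow ψ k) (tpow φ k) hψ hφ
      (SMajAux.isProb_tpow ψ hψ k) (SMajAux.isProb_tpow φ hφ k) h ih
    have hre := SMajAux.smaj_reindex (tens ψ (tpow ψ k)) (tens φ (tpow φ k))
      ((Fin.consEquiv (fun _ : Fin (k+1) => Fin n)).symm) ((Fin.consEquiv (fun _ : Fin (k+1) => Fin n)).symm) hstep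
    have heq : ∀ (v : Fin n → ℝ),
        tpow v (k+1) = (tens v (tpow v k)) ∘ ((Fin.consEquiv (fun _ : Fin (k+1) => Fin n)).symm) := by
      intro v
      funext f
      rw [Function.comp_apply, tpow, tens, Fin.prod_univ_succ]
      rfl
    rw [heq ψ, heq φ]
    exact hre
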